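/- Let N ≥ 3 and set 2⋆ = 2N/(N−2). Let J : (0,∞) → ℝ be measurable with J(ϱ) ≥ 1 for all ϱ > 0, let φ : (0,∞) → [0,∞), and suppose the function τ(ϱ) := ϱ^{1/2⋆} φ(ϱ) is locally absolutely continuous on (0,∞) with lim_{ϱ→0⁺} τ(ϱ) = 0 and lim_{ϱ→∞} τ(ϱ) = 0. Let D > 0 and assume ∫₀^∞ ϱ · τ'(ϱ)² · J(ϱ) dϱ ≤ D/(2⋆)² and ∫₀^∞ φ(ϱ)² ϱ^{−2/N} J(ϱ) dϱ ≤ 1. Then sup_{ϱ>0} ϱ^{1/2⋆} · | φ(ϱ) − D^{1/4} ϱ^{−1/2⋆} | ≤ 2·D^{1/4}; equivalently, ‖φ(ϱ) − D^{1/4} ϱ^{−1/2⋆}‖_{L^{2⋆,∞}(0,∞)} ≤ 2·D^{1/4}. -/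

import Mathlib

open MeasureTheory
open scoped ENNReal

/-- The critical Sobolev exponent `2⋆ = 2N/(N-2)`. -/
noncomputable def twoStar (N : ℕ) : ℝ := 2 * (N : ℝ) / ((N : ℝ) - 2)

/-- The auxiliary function `τ(ϱ) = ϱ^{1/2⋆} φ(ϱ)`. -/
noncomputable def tauFun (N : ℕ) (φ : ℝ → ℝ) (ϱ : ℝ) : ℝ :=
  ϱ ^ ((1:ℝ) / twoStar N) * φ ϱ

lemma lint_Cdiv (a b C : ℝ) (ha : 0 < a) (hab : a ≤ b) (hC : 0 ≤ C) :
    ∫⁻ t in Set.Ioo a b, ENNReal.ofReal (C / t) =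
      ENNReal.ofReal (C * (Real.log b - Real.log a)) := by
  have hb : 0 < b := lt_of_lt_of_le ha hab
  have hcont : ContinuousOn (fun t : ℝ => C / t) (Set.Icc a b) := by
    apply ContinuousOn.div continuousOn_const continuousOn_id
    intro x hx; exact ne_of_gt (lt_of_lt_of_le ha hx.1)
  have hint : IntegrableOn (fun t : ℝ => C / t) (Set.Ioo a b) := by
    exact (hcont.integrableOn_Icc).mono_set Set.Ioo_subset_Icc_self
  rw [← ofReal_integral_eq_lintegral_ofReal hint]
  · congr 1
    have h0 : (0:ℝ) ∉ Set.uIcc a b := by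
      rw [Set.uIcc_of_le hab]; intro h; exact absurd h.1 (not_le.2 ha)
    have := integral_one_div (a := a) (b := b) h0
    calc ∫ t in Set.Ioo a b, C / t
        = ∫ t in Set.Ioc a b, C / t := (integral_Ioc_eq_integral_Ioo).symm
      _ = ∫ t in a..b, C / t := (intervalIntegral.integral_of_le hab).symm
      _ = ∫ t in a..b, C * (1 / t) := by congr 1; ext t; ring
      _ = C * ∫ t in a..b, 1 / t := intervalIntegral.integral_const_mul _ _
      _ = C * (Real.log b - Real.log a) := by
          rw [this, Real.log_div (ne_of_gt hb) (ne_of_gt ha)]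
  · filter_upwards [ae_restrict_mem measurableSet_Ioo] with t ht
    exact div_nonneg hC (le_of_lt (lt_trans ha ht.1))

set_option maxHeartbeats 1000000 in
/-- Final step of the Hardy stability lemma: if
`∫₀^∞ ϱ τ'(ϱ)² J(ϱ) dϱ ≤ D/(2⋆)²` and `∫₀^∞ φ² ϱ^{-2/N} J dϱ ≤ 1`, with `J ≥ 1` and
`τ(ϱ) = ϱ^{1/2⋆} φ(ϱ)` locally absolutely continuous vanishing at `0⁺` and `∞`, then
`sup_{ϱ>0} ϱ^{1/2⋆}|φ(ϱ) − D^{1/4} ϱ^{-1/2⋆}| ≤ 2 D^{1/4}`. -/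
theorem stmt_14 (N : ℕ) (hN : 3 ≤ N) (J φ : ℝ → ℝ)
    (hJ : ∀ ϱ : ℝ, 0 < ϱ → 1 ≤ J ϱ)
    (hφ0 : ∀ ϱ : ℝ, 0 < ϱ → 0 ≤ φ ϱ)
    (hτac : ∀ a b : ℝ, 0 < a → a ≤ b →
      tauFun N φ b - tauFun N φ a = ∫ t in a..b, deriv (tauFun N φ) t)
    (hτ0 : Filter.Tendsto (tauFun N φ) (nhdsWithin 0 (Set.Ioi 0)) (nhds 0))
    (hτtop : Filter.Tendsto (tauFun N φ) Filter.atTop (nhds 0))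
    (D : ℝ) (hD : 0 < D)
    (hint1 : ∫⁻ ϱ in Set.Ioi (0:ℝ),
        ENNReal.ofReal (ϱ * (deriv (tauFun N φ) ϱ) ^ 2 * J ϱ) ≤
      ENNReal.ofReal (D / twoStar N ^ 2))
    (hint2 : ∫⁻ ϱ in Set.Ioi (0:ℝ),
        ENNReal.ofReal ((φ ϱ) ^ 2 * ϱ ^ (-(2:ℝ) / (N : ℝ)) * J ϱ) ≤ 1) :
    ∀ ϱ : ℝ, 0 < ϱ →
      ϱ ^ ((1:ℝ) / twoStar N) *
        |φ ϱ - D ^ ((1:ℝ)/4) * ϱ ^ (-(1:ℝ) / twoStar N)| ≤ 2 * D ^ ((1:ℝ)/4) := by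
  intro ϱ₀ hϱ₀
  set q : ℝ := twoStar N with hqdef
  set τ : ℝ → ℝ := tauFun N φ with hτdef
  have hN3 : (3:ℝ) ≤ (N:ℝ) := by exact_mod_cast hN
  have hN2 : (0:ℝ) < (N:ℝ) - 2 := by linarith
  have hq2 : (2:ℝ) ≤ q := by
    rw [hqdef, twoStar, le_div_iff₀ hN2]; linarith
  have hq0 : (0:ℝ) < q := by linarith
  have hτnn : ∀ t : ℝ, 0 < t → 0 ≤ τ t := fun t ht =>
    mul_nonneg (Real.rpow_nonneg ht.le _) (hφ0 t ht)
  have hexp : (2:ℝ)/q - 1 = -(2:ℝ)/(N:ℝ) := by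
    rw [hqdef, twoStar]
    field_simp
    ring
  have hτsq : ∀ t : ℝ, 0 < t → τ t ^ 2 / t = φ t ^ 2 * t ^ (-(2:ℝ)/(N:ℝ)) := by
    intro t ht
    have h1 : τ t ^ 2 = t ^ ((2:ℝ)/q) * φ t ^ 2 := by
      rw [hτdef, tauFun, mul_pow, ← Real.rpow_natCast (t ^ ((1:ℝ)/q)) 2,
        ← Real.rpow_mul ht.le]
      norm_num
      left
      congr 1
      ring
    rw [h1, ← hexp, Real.rpow_sub ht, Real.rpow_one]
    ring
  set u : ℝ := D ^ ((1:ℝ)/4) with hudef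
  have hu : 0 < u := Real.rpow_pos_of_pos hD _
  have hu4 : u ^ 4 = D := by
    rw [hudef, ← Real.rpow_natCast (D ^ ((1:ℝ)/4)) 4, ← Real.rpow_mul hD.le]
    norm_num
  set s : ℝ := Real.sqrt q with hsdef
  have hs : 0 < s := Real.sqrt_pos.2 hq0
  have hs1 : 1 ≤ s := by
    nlinarith [Real.sq_sqrt hq0.le, Real.sqrt_nonneg q]
  have hs2 : s ^ 2 = q := Real.sq_sqrt hq0.le
  set c : ℝ := u / s with hcdef
  have hc : 0 < c := div_pos hu hs
  set L₀ : ℝ := (s/u)^2 with hLdef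
  have hL₀ : 0 < L₀ := pow_pos (div_pos hs hu) 2
  set a : ℝ := ϱ₀ * Real.exp (-L₀) with hadef
  have ha : 0 < a := mul_pos hϱ₀ (Real.exp_pos _)
  have halt : a < ϱ₀ := by
    rw [hadef]
    nth_rewrite 2 [← mul_one ϱ₀]
    exact mul_lt_mul_of_pos_left (Real.exp_lt_one_iff.2 (by linarith)) hϱ₀
  have hloga : Real.log ϱ₀ - Real.log a = L₀ := by
    rw [hadef, Real.log_mul (ne_of_gt hϱ₀) (Real.exp_ne_zero _), Real.log_exp]
    ring
  -- main estimate: τ ϱ₀ ≤ 2c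
  have key : τ ϱ₀ ≤ c + c := by
    apply le_of_forall_pos_le_add
    intro δ hδ
    set ε : ℝ := c + δ with hεdef
    have hε : 0 < ε := by positivity
    -- Step A: find ϱ₁ ∈ Ioo a ϱ₀ with τ ϱ₁ ≤ ε
    obtain ⟨ϱ₁, hϱ₁mem, hϱ₁⟩ : ∃ t ∈ Set.Ioo a ϱ₀, τ t ≤ ε := by
      by_contra hcon
      push_neg at hcon
      have hchain : ENNReal.ofReal (ε^2 * L₀) ≤ 1 := by
        calc ENNReal.ofReal (ε^2 * L₀)
            = ∫⁻ t in Set.Ioo a ϱ₀, ENNReal.ofReal (ε^2 / t) := by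
              rw [lint_Cdiv a ϱ₀ (ε^2) ha halt.le (sq_nonneg ε), hloga]
          _ ≤ ∫⁻ t in Set.Ioo a ϱ₀,
                ENNReal.ofReal (φ t ^ 2 * t ^ (-(2:ℝ)/(N:ℝ)) * J t) := by
              apply setLIntegral_mono' measurableSet_Ioo
              intro t ht
              have ht0 : 0 < t := lt_trans ha ht.1
              apply ENNReal.ofReal_le_ofReal
              have hε2 : ε^2 ≤ τ t ^ 2 :=
                pow_le_pow_left₀ hε.le (hcon t ht).le 2
              calc ε^2 / t ≤ τ t ^ 2 / t := by gcongr
                _ = φ t ^ 2 * t ^ (-(2:ℝ)/(N:ℝ)) := hτsq t ht0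
                _ ≤ φ t ^ 2 * t ^ (-(2:ℝ)/(N:ℝ)) * J t :=
                    le_mul_of_one_le_right
                      (mul_nonneg (sq_nonneg _) (Real.rpow_nonneg ht0.le _))
                      (hJ t ht0)
          _ ≤ ∫⁻ t in Set.Ioi (0:ℝ),
                ENNReal.ofReal (φ t ^ 2 * t ^ (-(2:ℝ)/(N:ℝ)) * J t) :=
              lintegral_mono_set (fun t ht => lt_trans ha ht.1)
          _ ≤ 1 := hint2
      have hcL : c^2 * L₀ = 1 := by
        rw [hcdef, hLdef]
        field_simp
      have hgt1 : (1:ℝ) < ε^2 * L₀ := by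
        nlinarith [pow_lt_pow_left₀ (lt_add_of_pos_right c hδ) hc.le (n := 2)]
      have hlt : (1:ℝ≥0∞) < ENNReal.ofReal (ε^2 * L₀) := by
        rw [← ENNReal.ofReal_one]
        exact (ENNReal.ofReal_lt_ofReal_iff (by linarith)).2 hgt1
      exact absurd (lt_of_lt_of_le hlt hchain) (lt_irrefl _)
    have hϱ₁pos : 0 < ϱ₁ := lt_trans ha hϱ₁mem.1
    -- Step B: bound the integral of deriv τ over (ϱ₁, ϱ₀)
    have hbound : ∫ t in ϱ₁..ϱ₀, deriv τ t ≤ c := by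
      have hmes : Measurable (deriv τ) := measurable_deriv τ
      set f : ℝ → ℝ≥0∞ := fun t => ENNReal.ofReal ((Real.sqrt t)⁻¹) with hfdef
      set g : ℝ → ℝ≥0∞ := fun t => ENNReal.ofReal (Real.sqrt t * |deriv τ t|)
        with hgdef
      have hfm : Measurable f :=
        (Real.continuous_sqrt.measurable.inv).ennreal_ofReal
      have hgm : Measurable g :=
        (Real.continuous_sqrt.measurable.mul hmes.abs).ennreal_ofReal
      have hpq : (2:ℝ).HolderConjugate 2 := Real.HolderConjugate.two_two
      have hHold := ENNReal.lintegral_mul_le_Lp_mul_Lq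
        (volume.restrict (Set.Ioo ϱ₁ ϱ₀)) hpq hfm.aemeasurable hgm.aemeasurable
      have hA : ∫⁻ t in Set.Ioo ϱ₁ ϱ₀, ENNReal.ofReal ‖deriv τ t‖ =
          ∫⁻ t in Set.Ioo ϱ₁ ϱ₀, (f * g) t := by
        apply lintegral_congr_ae
        filter_upwards [ae_restrict_mem measurableSet_Ioo] with t ht
        have ht0 : 0 < t := lt_trans hϱ₁pos ht.1
        have hst : Real.sqrt t ≠ 0 := ne_of_gt (Real.sqrt_pos.2 ht0)
        simp only [Pi.mul_apply, hfdef, hgdef]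
        rw [← ENNReal.ofReal_mul (by positivity)]
        congr 1
        rw [Real.norm_eq_abs]
        field_simp
      have hf2 : ∫⁻ t in Set.Ioo ϱ₁ ϱ₀, f t ^ (2:ℝ) ≤ ENNReal.ofReal L₀ := by
        have heq : ∫⁻ t in Set.Ioo ϱ₁ ϱ₀, f t ^ (2:ℝ) =
            ∫⁻ t in Set.Ioo ϱ₁ ϱ₀, ENNReal.ofReal (1 / t) := by
          apply lintegral_congr_ae
          filter_upwards [ae_restrict_mem measurableSet_Ioo] with t ht
          have ht0 : 0 < t := lt_trans hϱ₁pos ht.1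
          rw [hfdef]
          rw [ENNReal.ofReal_rpow_of_nonneg (by positivity) (by norm_num)]
          congr 1
          rw [show (2:ℝ) = ((2:ℕ):ℝ) by norm_num, Real.rpow_natCast, inv_pow,
            Real.sq_sqrt ht0.le, one_div]
        rw [heq, lint_Cdiv ϱ₁ ϱ₀ 1 hϱ₁pos hϱ₁mem.2.le zero_le_one, one_mul]
        apply ENNReal.ofReal_le_ofReal
        rw [← hloga]
        have := Real.log_le_log ha hϱ₁mem.1.le
        linarith
      have hg2 : ∫⁻ t in Set.Ioo ϱ₁ ϱ₀, g t ^ (2:ℝ) ≤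
          ENNReal.ofReal (D / q ^ 2) := by
        have heq : ∀ t ∈ Set.Ioo ϱ₁ ϱ₀, g t ^ (2:ℝ) ≤
            ENNReal.ofReal (t * deriv τ t ^ 2 * J t) := by
          intro t ht
          have ht0 : 0 < t := lt_trans hϱ₁pos ht.1
          rw [hgdef, ENNReal.ofReal_rpow_of_nonneg (by positivity) (by norm_num)]
          apply ENNReal.ofReal_le_ofReal
          have h1 : (Real.sqrt t * |deriv τ t|) ^ (2:ℝ) = t * deriv τ t ^ 2 := by
            rw [show (2:ℝ) = ((2:ℕ):ℝ) by norm_num, Real.rpow_natCast, mul_pow,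
              Real.sq_sqrt ht0.le, sq_abs]
          rw [h1]
          exact le_mul_of_one_le_right
            (mul_nonneg ht0.le (sq_nonneg _)) (hJ t ht0)
        calc ∫⁻ t in Set.Ioo ϱ₁ ϱ₀, g t ^ (2:ℝ)
            ≤ ∫⁻ t in Set.Ioo ϱ₁ ϱ₀,
                ENNReal.ofReal (t * deriv τ t ^ 2 * J t) :=
              setLIntegral_mono' measurableSet_Ioo heq
          _ ≤ ∫⁻ t in Set.Ioi (0:ℝ),
                ENNReal.ofReal (t * deriv τ t ^ 2 * J t) :=
              lintegral_mono_set (fun t ht => lt_trans hϱ₁pos ht.1)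
          _ ≤ ENNReal.ofReal (D / q ^ 2) := hint1
      set R : ℝ≥0∞ := ENNReal.ofReal L₀ ^ ((1:ℝ)/2) *
          ENNReal.ofReal (D / q ^ 2) ^ ((1:ℝ)/2) with hRdef
      have hAR : ∫⁻ t in Set.Ioo ϱ₁ ϱ₀, ENNReal.ofReal ‖deriv τ t‖ ≤ R := by
        rw [hA]
        refine le_trans hHold ?_
        rw [hRdef]
        exact mul_le_mul' (ENNReal.rpow_le_rpow hf2 (by norm_num))
          (ENNReal.rpow_le_rpow hg2 (by norm_num))
      have hRtop : R ≠ ⊤ := by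
        rw [hRdef]
        exact ENNReal.mul_ne_top
          (ENNReal.rpow_ne_top_of_nonneg (by norm_num) ENNReal.ofReal_ne_top)
          (ENNReal.rpow_ne_top_of_nonneg (by norm_num) ENNReal.ofReal_ne_top)
      have hRreal : R.toReal = c := by
        rw [hRdef, ENNReal.toReal_mul, ← ENNReal.toReal_rpow, ← ENNReal.toReal_rpow,
          ENNReal.toReal_ofReal hL₀.le,
          ENNReal.toReal_ofReal (by positivity)]
        have h1 : L₀ ^ ((1:ℝ)/2) = s/u := by
          rw [hLdef, ← Real.sqrt_eq_rpow, Real.sqrt_sq (by positivity)]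
        have h2 : (D/q^2) ^ ((1:ℝ)/2) = u^2/q := by
          rw [show D/q^2 = (u^2/q)^2 by
              rw [div_pow, show (u^2)^2 = u^4 from by ring, hu4],
            ← Real.sqrt_eq_rpow, Real.sqrt_sq (by positivity)]
        rw [h1, h2, hcdef, ← hs2]
        field_simp
      calc ∫ t in ϱ₁..ϱ₀, deriv τ t
          = ∫ t in Set.Ioc ϱ₁ ϱ₀, deriv τ t :=
            intervalIntegral.integral_of_le hϱ₁mem.2.le
        _ ≤ ‖∫ t in Set.Ioc ϱ₁ ϱ₀, deriv τ t‖ := by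
            rw [Real.norm_eq_abs]; exact le_abs_self _
        _ ≤ (∫⁻ t in Set.Ioc ϱ₁ ϱ₀, ENNReal.ofReal ‖deriv τ t‖).toReal :=
            norm_integral_le_lintegral_norm _
        _ = (∫⁻ t in Set.Ioo ϱ₁ ϱ₀, ENNReal.ofReal ‖deriv τ t‖).toReal := by
            congr 1
            exact (setLIntegral_congr (Ioo_ae_eq_Ioc (a := ϱ₁) (b := ϱ₀))).symm
        _ ≤ R.toReal := ENNReal.toReal_mono hRtop hAR
        _ = c := hRreal
    have hfc := hτac ϱ₁ ϱ₀ hϱ₁pos hϱ₁mem.2.le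
    have : τ ϱ₀ - τ ϱ₁ ≤ c := hfc ▸ hbound
    rw [hεdef] at hϱ₁
    linarith
  -- conclude
  have hrw : ϱ₀ ^ ((1:ℝ)/q) * |φ ϱ₀ - u * ϱ₀ ^ (-(1:ℝ)/q)| = |τ ϱ₀ - u| := by
    rw [← abs_of_nonneg (Real.rpow_nonneg hϱ₀.le ((1:ℝ)/q)), ← abs_mul]
    congr 1
    rw [mul_sub, hτdef, tauFun]
    congr 1
    have h1 : ϱ₀ ^ ((1:ℝ)/q) * ϱ₀ ^ (-(1:ℝ)/q) = 1 := by
      rw [← Real.rpow_add hϱ₀, neg_div, add_neg_cancel, Real.rpow_zero]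
    rw [mul_comm u, ← mul_assoc, h1, one_mul]
  rw [hrw]
  have hcu : c ≤ u := by
    rw [hcdef]
    calc u / s ≤ u / 1 := div_le_div_of_nonneg_left hu.le one_pos hs1
    _ = u := div_one u
  have h0 : 0 ≤ τ ϱ₀ := hτnn ϱ₀ hϱ₀
  rw [abs_le]
  constructor <;> nlinarith
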